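/- Solutions of the Crank–Nicolson scheme conserve the discrete L² norm: if u^{n+1} = u^n + Δt·G(u^{n+1/2}) + Δt·ℍ(D₊D₋u^{n+1/2}) with u^{n+1/2} = (u^n + u^{n+1})/2, then ‖u^{n+1}‖ = ‖u^n‖. -/

import Mathlib

/-- Discrete Hilbert transform on ℤ. -/
noncomputable def Hdisc (u : ℤ → ℝ) (j : ℤ) : ℝ :=
  (1 / Real.pi) * ∑' k : ℤ, if k = j then 0
    else u k * (1 - (-1 : ℝ) ^ (j - k)) / ((j : ℝ) - (k : ℝ))

/-- Differences. -/
noncomputable def Dp (Δx : ℝ) (u : ℤ → ℝ) (j : ℤ) : ℝ := (u (j + 1) - u j) / Δx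
noncomputable def Dm (Δx : ℝ) (u : ℤ → ℝ) (j : ℤ) : ℝ := (u j - u (j - 1)) / Δx
noncomputable def Dsym (Δx : ℝ) (u : ℤ → ℝ) (j : ℤ) : ℝ := (u (j + 1) - u (j - 1)) / (2 * Δx)

/-- Discrete nonlinearity G(u)_j = ũ_j (Du)_j, ũ_j = (u_{j+1}+u_j+u_{j−1})/3. -/
noncomputable def Gnl (Δx : ℝ) (u : ℤ → ℝ) (j : ℤ) : ℝ :=
  (u (j + 1) + u j + u (j - 1)) / 3 * Dsym Δx u j

namespace CNaux

open Filter Finset Topology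

noncomputable def c (m : ℤ) : ℝ := if m = 0 then 0 else (1 - (-1 : ℝ) ^ m) / (m : ℝ)

lemma neg_one_zpow_even {m : ℤ} (h : Even m) : ((-1 : ℝ) ^ m) = 1 := by
  obtain ⟨k, rfl⟩ := h
  rw [← two_mul, zpow_mul]
  norm_num

lemma neg_one_zpow_odd {m : ℤ} (h : Odd m) : ((-1 : ℝ) ^ m) = -1 := by
  obtain ⟨k, rfl⟩ := h
  rw [zpow_add₀ (by norm_num : (-1:ℝ) ≠ 0), zpow_mul]
  norm_num

lemma c_even {m : ℤ} (h : Even m) : c m = 0 := by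
  unfold c
  split
  · rfl
  · rw [neg_one_zpow_even h]; simp

lemma odd_ne_zero {m : ℤ} (h : Odd m) : m ≠ 0 := by
  rintro rfl; exact (Int.not_odd_iff_even.mpr ⟨0, rfl⟩) h

lemma c_odd {m : ℤ} (h : Odd m) : c m = 2 / (m : ℝ) := by
  unfold c
  rw [if_neg (odd_ne_zero h), neg_one_zpow_odd h]
  norm_num

lemma c_zero : c 0 = 0 := by simp [c]

lemma c_neg (m : ℤ) : c (-m) = - c m := by
  rcases Int.even_or_odd m with h | h
  · rw [c_even h, c_even h.neg]; simp
  · rw [c_odd h, c_odd h.neg]; push_cast; ring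

lemma c_sq_le (m : ℤ) : c m ^ 2 ≤ 4 * (1 / (m : ℝ) ^ 2) := by
  rcases Int.even_or_odd m with h | h
  · rw [c_even h]
    have h0 : (0:ℝ)^2 = 0 := by norm_num
    rw [h0]
    positivity
  · rw [c_odd h, div_pow, mul_one_div]
    norm_num

lemma summable_c_sq : Summable (fun m : ℤ => c m ^ 2) := by
  apply Summable.of_nonneg_of_le (fun m => sq_nonneg _) c_sq_le
  exact (Real.summable_one_div_int_pow.mpr one_lt_two).mul_left 4


lemma Hdisc_eq (u : ℤ → ℝ) (j : ℤ) :
    Hdisc u j = (1 / Real.pi) * ∑' k : ℤ, u k * c (j - k) := by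
  unfold Hdisc
  congr 1
  apply tsum_congr
  intro k
  by_cases h : k = j
  · subst h; simp [c_zero]
  · have hjk : j - k ≠ 0 := by omega
    rw [if_neg h]
    unfold c
    rw [if_neg hjk]
    push_cast
    ring

/-- summable product of two ℓ² functions -/
lemma summable_mul {f g : ℤ → ℝ} (hf : Summable (fun j => f j ^ 2))
    (hg : Summable (fun j => g j ^ 2)) : Summable (fun j => f j * g j) := by
  rw [← summable_abs_iff]
  apply Summable.of_nonneg_of_le (fun j => abs_nonneg _)
    (fun j => ?_) (((hf.add hg).div_const 2))
  rw [abs_mul]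
  have := sq_nonneg (|f j| - |g j|)
  have h1 : |f j|^2 = f j ^2 := sq_abs _
  have h2 : |g j|^2 = g j ^2 := sq_abs _
  nlinarith [abs_nonneg (f j), abs_nonneg (g j)]

lemma summable_shift (f : ℤ → ℝ) (n : ℤ) (hf : Summable f) :
    Summable (fun j => f (j + n)) :=
  ((Equiv.addRight n).summable_iff (f := f)).mpr hf

lemma summable_c_shift (j : ℤ) : Summable (fun k : ℤ => c (j - k) ^ 2) := by
  have := (Equiv.subLeft j).summable_iff (f := fun m => c m ^ 2)
  exact this.mpr summable_c_sq

lemma summable_inner {u : ℤ → ℝ} (hu : Summable (fun j => u j ^ 2)) (j : ℤ) :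
    Summable (fun k => u k * c (j - k)) :=
  summable_mul hu (summable_c_shift j)

lemma summable_c_shift' (k : ℤ) : Summable (fun j : ℤ => c (j - k) ^ 2) := by
  have h := summable_shift (fun m => c m ^ 2) (-k) summable_c_sq
  apply h.congr
  intro j
  rw [← sub_eq_add_neg]


lemma Hdisc_add (u v : ℤ → ℝ) (hu : Summable (fun j => u j ^ 2))
    (hv : Summable (fun j => v j ^ 2)) (j : ℤ) :
    Hdisc (fun k => u k + v k) j = Hdisc u j + Hdisc v j := by
  rw [Hdisc_eq, Hdisc_eq, Hdisc_eq, ← mul_add, ← Summable.tsum_add (summable_inner hu j) (summable_inner hv j)]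
  congr 1
  apply tsum_congr
  intro k
  ring

lemma Hdisc_const_mul (C : ℝ) (u : ℤ → ℝ) (j : ℤ) :
    Hdisc (fun k => C * u k) j = C * Hdisc u j := by
  rw [Hdisc_eq, Hdisc_eq]
  have : ∑' (k : ℤ), C * u k * c (j - k) = C * ∑' k, u k * c (j - k) := by
    rw [← tsum_mul_left]
    apply tsum_congr; intro k; ring
  rw [this]; ring

lemma Hdisc_shift (u : ℤ → ℝ) (n : ℤ) (j : ℤ) :
    Hdisc (fun k => u (k + n)) j = Hdisc u (j + n) := by
  rw [Hdisc_eq, Hdisc_eq]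
  congr 1
  have := (Equiv.addRight n).tsum_eq (f := fun k => u k * c (j + n - k))
  rw [← this]
  apply tsum_congr
  intro k
  simp only [Equiv.coe_addRight]
  congr 2
  omega


/-- second difference without the Δx factor -/
def D2 (u : ℤ → ℝ) (j : ℤ) : ℝ := u (j + 1) - 2 * u j + u (j - 1)

lemma addneg (k : ℤ) : k + (-1 : ℤ) = k - 1 := by omega

lemma tsum_add3 {f g h : ℤ → ℝ} (hf : Summable f) (hg : Summable g) (hh : Summable h) :
    ∑' j, (f j + g j + h j) = (∑' j, f j) + (∑' j, g j) + (∑' j, h j) := by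
  rw [Summable.tsum_add (hf.add hg) hh, Summable.tsum_add hf hg]

lemma L2_shift (u : ℤ → ℝ) (n : ℤ) (hu : Summable (fun j => u j ^ 2)) :
    Summable (fun j => u (j + n) ^ 2) :=
  summable_shift (fun j => u j ^ 2) n hu

lemma L2_shift' (u : ℤ → ℝ) (hu : Summable (fun j => u j ^ 2)) :
    Summable (fun j => u (j - 1) ^ 2) := by
  have := L2_shift u (-1) hu
  simpa only [addneg] using this

lemma L2_D2 {u : ℤ → ℝ} (hu : Summable (fun j => u j ^ 2)) :
    Summable (fun j => D2 u j ^ 2) := by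
  have h1 := L2_shift u 1 hu
  have h2 := L2_shift' u hu
  apply Summable.of_nonneg_of_le (fun j => sq_nonneg _) (fun j => ?_)
    (((h1.add (hu.mul_left 4)).add h2).mul_left 3)
  unfold D2
  nlinarith [sq_nonneg (u (j+1) + 2 * u j), sq_nonneg (u (j+1) - u (j-1)),
    sq_nonneg (2 * u j + u (j-1))]

lemma Hdisc_D2 {u : ℤ → ℝ} (hu : Summable (fun j => u j ^ 2)) (j : ℤ) :
    Hdisc (fun k => D2 u k) j = D2 (fun i => Hdisc u i) j := by
  have h1 : Summable (fun k => u (k + 1) ^ 2) := L2_shift u 1 hu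
  have hm1 : Summable (fun k => u (k - 1) ^ 2) := L2_shift' u hu
  have hrest : Summable (fun k => (-2 * u k + u (k - 1)) ^ 2) := by
    apply Summable.of_nonneg_of_le (fun j => sq_nonneg _) (fun k => ?_)
      (((hu.mul_left 4).add hm1).mul_left 2)
    nlinarith [sq_nonneg (2 * u k + u (k - 1)), sq_nonneg (2 * u k - u (k-1))]
  have hD2 : (fun k => D2 u k) = (fun k => u (k + 1) + (-2 * u k + u (k - 1))) := by
    funext k; unfold D2; ring
  rw [hD2, Hdisc_add _ _ h1 hrest j]
  have hmul : Summable (fun k => (-2 * u k) ^ 2) := by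
    apply (hu.mul_left 4).congr; intro k; ring
  have h2 : Hdisc (fun k => -2 * u k + u (k - 1)) j
      = -2 * Hdisc u j + Hdisc u (j - 1) := by
    rw [Hdisc_add _ _ hmul hm1 j, Hdisc_const_mul (-2) u j]
    have e1 : (fun k : ℤ => u (k - 1)) = (fun k : ℤ => u (k + (-1))) := by
      funext k; rw [addneg]
    rw [e1, Hdisc_shift u (-1) j, addneg]
  rw [h2, Hdisc_shift u 1 j]
  unfold D2
  ring

lemma sum_D2_comm (s : Finset ℤ) (u : ℤ → ℝ) (ha : ∀ j ∉ s, u j = 0) (h : ℤ → ℝ) :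
    ∑' j, u j * D2 h j = ∑' j, D2 u j * h j := by
  have hsupp : ∀ (f g : ℤ → ℝ), Summable (fun j => u j * f j * g j) := by
    intro f g
    apply summable_of_ne_finset_zero (s := s)
    intro j hj
    rw [ha j hj, zero_mul, zero_mul]
  have hsupp' : ∀ (f : ℤ → ℝ), Summable (fun j => u (j + 1) * f j) := by
    intro f
    apply summable_of_ne_finset_zero (s := s.image (fun x => x - 1))
    intro j hj
    have hz : u (j + 1) = 0 := by
      apply ha
      intro hmem
      exact hj (Finset.mem_image.mpr ⟨j + 1, hmem, by omega⟩)
    rw [hz, zero_mul]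
  have hsupp'' : ∀ (f : ℤ → ℝ), Summable (fun j => u (j - 1) * f j) := by
    intro f
    apply summable_of_ne_finset_zero (s := s.image (fun x => x + 1))
    intro j hj
    have hz : u (j - 1) = 0 := by
      apply ha
      intro hmem
      exact hj (Finset.mem_image.mpr ⟨j - 1, hmem, by omega⟩)
    rw [hz, zero_mul]
  have hA : ∀ (f : ℤ → ℝ), Summable (fun j => u j * f j) := by
    intro f; have := hsupp f (fun _ => 1); simpa using this
  have lhs : (fun j => u j * D2 h j)
      = (fun j => (u j * h (j + 1)) + (-2 * (u j * h j)) + (u j * h (j - 1))) := by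
    funext j; unfold D2; ring
  have rhs : (fun j => D2 u j * h j)
      = (fun j => (u (j + 1) * h j) + (-2 * (u j * h j)) + (u (j - 1) * h j)) := by
    funext j; unfold D2; ring
  rw [lhs, rhs]
  rw [tsum_add3 (hA _) ((hA h).mul_left (-2) |>.congr (fun j => by ring)) (hA _)]
  rw [tsum_add3 (hsupp' h) ((hA h).mul_left (-2) |>.congr (fun j => by ring)) (hsupp'' h)]
  have e13 : ∑' j, u j * h (j + 1) = ∑' j, u (j - 1) * h j := by
    have e := (Equiv.subRight (1:ℤ)).tsum_eq (f := fun j => u j * h (j + 1))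
    rw [← e]
    apply tsum_congr
    intro j
    simp only [Equiv.subRight_apply]
    have : j - 1 + 1 = j := by omega
    rw [this]
  have e31 : ∑' j, u j * h (j - 1) = ∑' j, u (j + 1) * h j := by
    have e := (Equiv.addRight (1:ℤ)).tsum_eq (f := fun j => u j * h (j - 1))
    rw [← e]
    apply tsum_congr
    intro j
    simp only [Equiv.coe_addRight]
    have : j + 1 - 1 = j := by omega
    rw [this]
  rw [e13, e31]
  ring


/-- skew-symmetry swap for finitely supported `a` -/
lemma swap_lemma (s : Finset ℤ) (a u : ℤ → ℝ) (ha : ∀ j ∉ s, a j = 0)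
    (hu : Summable (fun j => u j ^ 2)) :
    ∑' k, a k * Hdisc u k = - ∑' j, Hdisc a j * u j := by
  have hrep : ∀ j, Hdisc a j = (1 / Real.pi) * ∑ k ∈ s, a k * c (j - k) := by
    intro j
    rw [Hdisc_eq]
    congr 1
    exact tsum_eq_sum (fun k hk => by rw [ha k hk, zero_mul])
  have hexp : (fun j => Hdisc a j * u j)
      = fun j => ∑ k ∈ s, ((1 / Real.pi) * a k) * (u j * c (j - k)) := by
    funext j
    rw [hrep j, Finset.mul_sum, Finset.sum_mul]
    apply Finset.sum_congr rfl
    intro k _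
    ring
  have hsummand : ∀ k : ℤ, Summable (fun j => ((1 / Real.pi) * a k) * (u j * c (j - k))) := by
    intro k
    exact (summable_mul hu (summable_c_shift' k)).mul_left _
  have hswap : ∑' j, Hdisc a j * u j
      = ∑ k ∈ s, ∑' j, ((1 / Real.pi) * a k) * (u j * c (j - k)) := by
    rw [hexp]
    exact Summable.tsum_finsetSum (fun k _ => hsummand k)
  have hinner : ∀ k : ℤ, ∑' j, ((1 / Real.pi) * a k) * (u j * c (j - k))
      = - (a k * Hdisc u k) := by
    intro k
    rw [tsum_mul_left]
    have hneg : ∑' j, u j * c (j - k) = - (Real.pi * Hdisc u k) := by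
      have e1 : ∑' j, u j * c (j - k) = - ∑' j, u j * c (k - j) := by
        rw [← tsum_neg]
        apply tsum_congr
        intro j
        have : c (j - k) = - c (k - j) := by
          rw [← c_neg]; congr 1; omega
        rw [this]; ring
      rw [e1, Hdisc_eq]
      have : Real.pi * ((1 / Real.pi) * ∑' j, u j * c (k - j)) = ∑' j, u j * c (k - j) := by
        field_simp
      rw [this]
    rw [hneg]
    field_simp
  rw [hswap, Finset.sum_congr rfl (fun k _ => hinner k), ← Finset.sum_neg_distrib]
  simp only [neg_neg]
  exact tsum_eq_sum (fun k hk => by rw [ha k hk, zero_mul])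


lemma tendsto_Icc_atTop : Tendsto (fun N : ℕ => Finset.Icc (-(N:ℤ)) N) atTop atTop := by
  apply Filter.tendsto_atTop_finset_of_monotone
  · intro a b hab
    apply Finset.Icc_subset_Icc <;> omega
  · intro x
    refine ⟨x.natAbs, ?_⟩
    rw [Finset.mem_Icc]
    omega

/-- telescoping sums over ℤ vanish -/
lemma tele (g : ℤ → ℝ) (K : ℝ) (hK : 0 ≤ K) (hgb : ∀ j : ℤ, j ≠ 0 → |g j| ≤ K / |(j:ℝ)|)
    (m : ℤ) (hm : 0 < m) (ht : Summable (fun j => g j - g (j + m))) :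
    ∑' j, (g j - g (j + m)) = 0 := by
  set t := fun j => g j - g (j + m) with htdef
  have hP : Tendsto (fun N : ℕ => ∑ j ∈ Finset.Icc (-(N:ℤ)) N, t j) atTop
      (𝓝 (∑' j, t j)) := ht.hasSum.comp tendsto_Icc_atTop
  -- the bound
  have hbound : ∀ N : ℕ, m ≤ (N:ℤ) →
      |∑ j ∈ Finset.Icc (-(N:ℤ)) N, t j| ≤ 2 * (m:ℝ) * (K / ((N:ℝ) - (m:ℝ) + 1)) := by
    intro N hN
    set A := Finset.Icc (-(N:ℤ)) N with hA
    set B := Finset.Icc (-(N:ℤ) + m) ((N:ℤ) + m) with hB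
    have hshift : ∑ j ∈ A, g (j + m) = ∑ j ∈ B, g j := by
      apply Finset.sum_bij' (i := fun a _ => a + m) (j := fun b _ => b - m)
      · intro a ha
        simp only [hA, hB, Finset.mem_Icc] at *
        omega
      · intro b hb
        simp only [hA, hB, Finset.mem_Icc] at *
        omega
      · intro a _; omega
      · intro b _; omega
      · intro a _; rfl
    have hsplit : ∑ j ∈ A, t j = (∑ j ∈ A \ B, g j) - (∑ j ∈ B \ A, g j) := by
      have h1 : ∑ j ∈ A, t j = (∑ j ∈ A, g j) - (∑ j ∈ B, g j) := by
        rw [htdef, Finset.sum_sub_distrib, hshift]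
      have hU1 : (∑ j ∈ A, g j) + (∑ j ∈ B \ A, g j) = ∑ j ∈ A ∪ B, g j := by
        rw [← Finset.sum_union Finset.disjoint_sdiff, Finset.union_sdiff_self_eq_union]
      have hU2 : (∑ j ∈ B, g j) + (∑ j ∈ A \ B, g j) = ∑ j ∈ A ∪ B, g j := by
        rw [← Finset.sum_union Finset.disjoint_sdiff, Finset.union_sdiff_self_eq_union,
          Finset.union_comm]
      linarith
    have hden : (0:ℝ) < (N:ℝ) - (m:ℝ) + 1 := by
      have : (m:ℝ) ≤ (N:ℝ) := by exact_mod_cast hN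
      linarith
    -- generic bound for sums over small boundary intervals
    have hgen : ∀ (a b : ℤ), (∀ x, a ≤ x → x ≤ b → (x ≠ 0 ∧ (N:ℤ) - m + 1 ≤ |x|)) →
        b + 1 - a ≤ m →
        |∑ j ∈ Finset.Icc a b, g j| ≤ (m:ℝ) * (K / ((N:ℝ) - (m:ℝ) + 1)) := by
      intro a b hx hcard
      calc |∑ j ∈ Finset.Icc a b, g j| ≤ ∑ j ∈ Finset.Icc a b, |g j| :=
            Finset.abs_sum_le_sum_abs _ _
        _ ≤ (Finset.Icc a b).card • (K / ((N:ℝ) - (m:ℝ) + 1)) := by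
            apply Finset.sum_le_card_nsmul
            intro x hxm
            rw [Finset.mem_Icc] at hxm
            obtain ⟨hx0, hxabs⟩ := hx x hxm.1 hxm.2
            calc |g x| ≤ K / |(x:ℝ)| := hgb x hx0
              _ ≤ K / ((N:ℝ) - (m:ℝ) + 1) := by
                  apply div_le_div_of_nonneg_left hK hden
                  have : ((N:ℤ) - m + 1 : ℤ) ≤ |x| := hxabs
                  calc ((N:ℝ) - (m:ℝ) + 1) = (((N:ℤ) - m + 1 : ℤ) : ℝ) := by push_cast; ring
                    _ ≤ ((|x| : ℤ) : ℝ) := by exact_mod_cast this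
                    _ = |(x:ℝ)| := by rw [Int.cast_abs]
        _ ≤ (m:ℝ) * (K / ((N:ℝ) - (m:ℝ) + 1)) := by
            rw [nsmul_eq_mul, Int.card_Icc]
            apply mul_le_mul_of_nonneg_right _ (by positivity)
            have h1 : ((b + 1 - a).toNat : ℤ) ≤ m := by omega
            exact_mod_cast h1
    have hAB : A \ B = Finset.Icc (-(N:ℤ)) (-(N:ℤ) + m - 1) := by
      ext x
      simp only [hA, hB, Finset.mem_sdiff, Finset.mem_Icc]
      omega
    have hBA : B \ A = Finset.Icc ((N:ℤ) + 1) ((N:ℤ) + m) := by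
      ext x
      simp only [hA, hB, Finset.mem_sdiff, Finset.mem_Icc]
      omega
    rw [hsplit, hAB, hBA]
    have b1 := hgen (-(N:ℤ)) (-(N:ℤ) + m - 1)
      (by
        intro x h1 h2
        refine ⟨by omega, ?_⟩
        have hx : (N:ℤ) - m + 1 ≤ -x := by omega
        exact hx.trans (neg_le_abs x)) (by omega)
    have b2 := hgen ((N:ℤ) + 1) ((N:ℤ) + m)
      (by
        intro x h1 h2
        refine ⟨by omega, ?_⟩
        have hx : (N:ℤ) - m + 1 ≤ x := by omega
        exact hx.trans (le_abs_self x)) (by omega)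
    calc |∑ j ∈ Finset.Icc (-(N:ℤ)) (-(N:ℤ) + m - 1), g j
          - ∑ j ∈ Finset.Icc ((N:ℤ) + 1) ((N:ℤ) + m), g j|
        ≤ |∑ j ∈ Finset.Icc (-(N:ℤ)) (-(N:ℤ) + m - 1), g j|
          + |∑ j ∈ Finset.Icc ((N:ℤ) + 1) ((N:ℤ) + m), g j| := abs_sub _ _
      _ ≤ 2 * (m:ℝ) * (K / ((N:ℝ) - (m:ℝ) + 1)) := by linarith
  -- the bound tends to 0
  have hb0 : Tendsto (fun N : ℕ => 2 * (m:ℝ) * (K / ((N:ℝ) - (m:ℝ) + 1))) atTop (𝓝 0) := by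
    have hdiv : Tendsto (fun N : ℕ => (2 * (m:ℝ) * K) / ((N:ℝ) - (m:ℝ) + 1)) atTop (𝓝 0) := by
      apply Filter.Tendsto.div_atTop tendsto_const_nhds
      have : Tendsto (fun N : ℕ => (N:ℝ) + (1 - (m:ℝ))) atTop atTop :=
        Filter.tendsto_atTop_add_const_right atTop _ tendsto_natCast_atTop_atTop
      apply this.congr
      intro N; ring
    apply hdiv.congr
    intro N
    ring
  have h0 : Tendsto (fun N : ℕ => ∑ j ∈ Finset.Icc (-(N:ℤ)) N, t j) atTop (𝓝 0) := by
    apply squeeze_zero_norm' _ hb0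
    filter_upwards [Filter.eventually_atTop.mpr ⟨m.toNat, fun N hN => hN⟩] with N hN
    exact hbound N (by omega)
  exact tendsto_nhds_unique hP h0


noncomputable def rho (m : ℤ) : ℝ := ∑' j : ℤ, c j * c (j + m)

lemma summable_rho_term (m : ℤ) : Summable (fun j : ℤ => c j * c (j + m)) := by
  apply summable_mul (g := fun j => c (j + m)) summable_c_sq
  exact summable_shift (fun j => c j ^ 2) m summable_c_sq

lemma rho_neg_eq (m : ℤ) : rho (-m) = rho m := by
  unfold rho
  have e := (Equiv.addRight m).tsum_eq (f := fun j : ℤ => c j * c (j + -m))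
  rw [← e]
  apply tsum_congr
  intro j
  simp only [Equiv.coe_addRight]
  have h1 : j + m + -m = j := by omega
  rw [h1]
  ring

lemma rho_pos_even {m : ℤ} (he : Even m) (hpos : 0 < m) : rho m = 0 := by
  set g : ℤ → ℝ := fun j => if Even j then 0 else (4 / (m:ℝ)) * (1 / (j:ℝ)) with hg
  have hm0 : (m:ℝ) ≠ 0 := Int.cast_ne_zero.mpr (by omega)
  have hterm : ∀ j : ℤ, c j * c (j + m) = g j - g (j + m) := by
    intro j
    rcases Int.even_or_odd j with hj | hj
    · have hjm : Even (j + m) := hj.add he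
      rw [c_even hj, zero_mul, hg]
      simp [hj, hjm]
    · have hjm : Odd (j + m) := hj.add_even he
      rw [c_odd hj, c_odd hjm, hg]
      simp only [if_neg (Int.not_even_iff_odd.mpr hj), if_neg (Int.not_even_iff_odd.mpr hjm)]
      have h1 : (j:ℝ) ≠ 0 := Int.cast_ne_zero.mpr (odd_ne_zero hj)
      have h2 : ((j + m : ℤ):ℝ) ≠ 0 := Int.cast_ne_zero.mpr (odd_ne_zero hjm)
      push_cast at h2 ⊢
      field_simp
      ring
  have hK : 0 ≤ 4 / (m:ℝ) := by positivity
  have hgb : ∀ j : ℤ, j ≠ 0 → |g j| ≤ (4 / (m:ℝ)) / |(j:ℝ)| := by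
    intro j hj
    have hjr : |(j:ℝ)| > 0 := by
      have : (j:ℝ) ≠ 0 := Int.cast_ne_zero.mpr hj
      positivity
    rw [hg]
    by_cases hev : Even j
    · simp only [if_pos hev, abs_zero]
      positivity
    · simp only [if_neg hev]
      rw [abs_mul, abs_of_nonneg hK]
      apply le_of_eq
      rw [abs_div, abs_one, mul_one_div]
  unfold rho
  rw [tsum_congr hterm]
  exact tele g _ hK hgb m hpos ((summable_rho_term m).congr hterm)

lemma rho_eq_zero {m : ℤ} (hm : m ≠ 0) : rho m = 0 := by
  rcases Int.even_or_odd m with he | ho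
  · rcases lt_or_gt_of_ne hm with hneg | hpos
    · rw [← rho_neg_eq]
      exact rho_pos_even he.neg (by omega)
    · exact rho_pos_even he hpos
  · unfold rho
    have hz : ∀ j : ℤ, c j * c (j + m) = 0 := by
      intro j
      rcases Int.even_or_odd j with hj | hj
      · rw [c_even hj, zero_mul]
      · have hev : Even (j + m) := by
          rcases hj with ⟨a, ha⟩; rcases ho with ⟨b, hb⟩
          exact ⟨a + b + 1, by omega⟩
        rw [c_even hev, mul_zero]
    rw [tsum_congr hz, tsum_zero]

lemma rho_zero_nonneg : 0 ≤ rho 0 := by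
  unfold rho
  apply tsum_nonneg
  intro j
  have : j + 0 = j := by omega
  rw [this]
  exact mul_self_nonneg _



lemma Hsq (s : Finset ℤ) (a : ℤ → ℝ) (ha : ∀ j ∉ s, a j = 0) :
    Summable (fun j => (Hdisc a j) ^ 2) ∧
    ∑' j, (Hdisc a j) ^ 2 = (rho 0 / Real.pi ^ 2) * ∑' j, a j ^ 2 := by
  set F : ℤ → ℤ → ℤ → ℝ := fun k k' j =>
    ((1 / Real.pi) * a k * ((1 / Real.pi) * a k')) * (c (j - k) * c (j - k')) with hF
  have hrep : ∀ j, Hdisc a j = ∑ k ∈ s, (1 / Real.pi) * (a k * c (j - k)) := by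
    intro j
    rw [Hdisc_eq]
    rw [tsum_eq_sum (s := s) (fun k hk => by rw [ha k hk, zero_mul])]
    rw [Finset.mul_sum]
  have hsq : ∀ j, (Hdisc a j) ^ 2 = ∑ k ∈ s, ∑ k' ∈ s, F k k' j := by
    intro j
    rw [hrep, sq, Finset.sum_mul_sum]
    apply Finset.sum_congr rfl
    intro k _
    apply Finset.sum_congr rfl
    intro k' _
    rw [hF]
    ring
  have hFsum : ∀ k k' : ℤ, Summable (F k k') := by
    intro k k'
    apply Summable.mul_left
    exact summable_mul (summable_c_shift' k) (summable_c_shift' k')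
  have hinner : ∀ k : ℤ, Summable (fun j => ∑ k' ∈ s, F k k' j) :=
    fun k => summable_sum (fun k' _ => hFsum k k')
  have hsum : Summable (fun j => ∑ k ∈ s, ∑ k' ∈ s, F k k' j) :=
    summable_sum (fun k _ => hinner k)
  have hS : Summable (fun j => (Hdisc a j) ^ 2) := hsum.congr (fun j => (hsq j).symm)
  refine ⟨hS, ?_⟩
  have hre : ∀ k k' : ℤ, ∑' j, c (j - k) * c (j - k') = rho (k - k') := by
    intro k k'
    have e := (Equiv.addRight k).tsum_eq (f := fun j => c (j - k) * c (j - k'))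
    rw [← e]
    apply tsum_congr
    intro j
    simp only [Equiv.coe_addRight]
    have e1 : j + k - k = j := by omega
    have e2 : j + k - k' = j + (k - k') := by omega
    rw [e1, e2]
  calc ∑' j, (Hdisc a j) ^ 2 = ∑' j, ∑ k ∈ s, ∑ k' ∈ s, F k k' j := tsum_congr hsq
    _ = ∑ k ∈ s, ∑' j, ∑ k' ∈ s, F k k' j := Summable.tsum_finsetSum (fun k _ => hinner k)
    _ = ∑ k ∈ s, ∑ k' ∈ s, ∑' j, F k k' j := by
        apply Finset.sum_congr rfl
        intro k _
        exact Summable.tsum_finsetSum (fun k' _ => hFsum k k')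
    _ = ∑ k ∈ s, ((1 / Real.pi) * a k * ((1 / Real.pi) * a k)) * rho 0 := by
        apply Finset.sum_congr rfl
        intro k hk
        rw [Finset.sum_eq_single_of_mem k hk]
        · rw [hF]
          simp only []
          rw [tsum_mul_left, hre k k, sub_self]
        · intro k' _ hne
          rw [hF]
          simp only []
          rw [tsum_mul_left, hre k k', rho_eq_zero (by omega : k - k' ≠ 0), mul_zero]
    _ = (rho 0 / Real.pi ^ 2) * ∑ k ∈ s, a k ^ 2 := by
        rw [Finset.mul_sum]
        apply Finset.sum_congr rfl
        intro k _
        ring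
    _ = (rho 0 / Real.pi ^ 2) * ∑' j, a j ^ 2 := by
        congr 1
        exact (tsum_eq_sum (fun k hk => by rw [ha k hk]; ring)).symm

lemma tsum_cs (f g : ℤ → ℝ) (hf : Summable (fun j => f j ^ 2)) (hg : Summable (fun j => g j ^ 2)) :
    |∑' j, f j * g j| ≤ Real.sqrt (∑' j, f j ^ 2) * Real.sqrt (∑' j, g j ^ 2) := by
  set A := ∑' j, f j ^ 2 with hA
  set B := ∑' j, g j ^ 2 with hB
  have hA0 : 0 ≤ A := tsum_nonneg (fun j => sq_nonneg _)
  have hB0 : 0 ≤ B := tsum_nonneg (fun j => sq_nonneg _)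
  have hf' : Summable (fun j => |f j| ^ 2) := hf.congr (fun j => (sq_abs (f j)).symm)
  have hg' : Summable (fun j => |g j| ^ 2) := hg.congr (fun j => (sq_abs (g j)).symm)
  have habs : Summable (fun j => |f j| * |g j|) := summable_mul hf' hg'
  have h1 : |∑' j, f j * g j| ≤ ∑' j, |f j| * |g j| := by
    have := norm_tsum_le_tsum_norm (f := fun j => f j * g j) (by simpa using habs)
    simpa [abs_mul] using this
  have h2 : ∑' j, |f j| * |g j| ≤ Real.sqrt A * Real.sqrt B := by
    apply Summable.tsum_le_of_sum_le habs
    intro t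
    have hx : 0 ≤ ∑ j ∈ t, |f j| * |g j| :=
      Finset.sum_nonneg (fun j _ => mul_nonneg (abs_nonneg _) (abs_nonneg _))
    have hcs := Finset.sum_mul_sq_le_sq_mul_sq t (fun j => |f j|) (fun j => |g j|)
    have e2 : ∑ j ∈ t, |f j| ^ 2 ≤ A := by
      apply le_trans (le_of_eq (Finset.sum_congr rfl (fun j _ => sq_abs (f j))))
      exact Summable.sum_le_tsum t (fun i _ => sq_nonneg _) hf
    have e3 : ∑ j ∈ t, |g j| ^ 2 ≤ B := by
      apply le_trans (le_of_eq (Finset.sum_congr rfl (fun j _ => sq_abs (g j))))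
      exact Summable.sum_le_tsum t (fun i _ => sq_nonneg _) hg
    have hsq2 : (∑ j ∈ t, |f j| * |g j|) ^ 2 ≤ A * B := by
      apply le_trans hcs
      apply mul_le_mul e2 e3 (Finset.sum_nonneg (fun j _ => sq_nonneg _)) hA0
    have := (Real.le_sqrt hx (by positivity)).mpr hsq2
    rwa [Real.sqrt_mul hA0] at this
  exact le_trans h1 h2


lemma DpDm_eq (Δx : ℝ) (hΔx : Δx ≠ 0) (u : ℤ → ℝ) (k : ℤ) :
    Dp Δx (Dm Δx u) k = D2 u k / Δx ^ 2 := by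
  unfold Dp Dm D2
  have e : k + 1 - 1 = k := by omega
  rw [e]
  field_simp
  ring

lemma D2_l2_bound (u : ℤ → ℝ) (hu : Summable (fun j => u j ^ 2)) :
    ∑' j, D2 u j ^ 2 ≤ 18 * ∑' j, u j ^ 2 := by
  have h1 : Summable (fun j => u (j + 1) ^ 2) := L2_shift u 1 hu
  have h2 : Summable (fun j => u (j - 1) ^ 2) := L2_shift' u hu
  have hRHS : Summable (fun j => 3 * u (j + 1) ^ 2 + 12 * u j ^ 2 + 3 * u (j - 1) ^ 2) :=
    ((h1.mul_left 3).add (hu.mul_left 12)).add (h2.mul_left 3)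
  have hpt : ∀ j, D2 u j ^ 2 ≤ 3 * u (j + 1) ^ 2 + 12 * u j ^ 2 + 3 * u (j - 1) ^ 2 := by
    intro j
    unfold D2
    nlinarith [sq_nonneg (u (j+1) + 2 * u j), sq_nonneg (u (j+1) - u (j-1)),
      sq_nonneg (2 * u j + u (j-1))]
  have hle := Summable.tsum_le_tsum hpt (L2_D2 hu) hRHS
  have e1 : ∑' j, u (j + 1) ^ 2 = ∑' j, u j ^ 2 :=
    (Equiv.addRight (1:ℤ)).tsum_eq (f := fun j => u j ^ 2)
  have e2 : ∑' j, u (j - 1) ^ 2 = ∑' j, u j ^ 2 :=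
    (Equiv.subRight (1:ℤ)).tsum_eq (f := fun j => u j ^ 2)
  calc ∑' j, D2 u j ^ 2 ≤ ∑' j, (3 * u (j + 1) ^ 2 + 12 * u j ^ 2 + 3 * u (j - 1) ^ 2) := hle
    _ = 3 * ∑' j, u (j+1) ^ 2 + 12 * ∑' j, u j ^ 2 + 3 * ∑' j, u (j-1) ^ 2 := by
        rw [Summable.tsum_add ((h1.mul_left 3).add (hu.mul_left 12)) (h2.mul_left 3),
          Summable.tsum_add (h1.mul_left 3) (hu.mul_left 12), tsum_mul_left, tsum_mul_left, tsum_mul_left]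
    _ ≤ 18 * ∑' j, u j ^ 2 := by rw [e1, e2]; ring_nf; rfl

end CNaux


open CNaux Filter Finset Topology in
theorem stmt_12 (Δx Δt : ℝ) (hΔx : 0 < Δx) (hΔt : 0 < Δt) (un unp1 : ℤ → ℝ)
    (hun : Summable (fun j => (un j) ^ 2)) (hunp1 : Summable (fun j => (unp1 j) ^ 2))
    (hscheme : ∀ j : ℤ,
      unp1 j = un j + Δt * Gnl Δx (fun i => (un i + unp1 i) / 2) j
        + Δt * Hdisc (Dp Δx (Dm Δx (fun i => (un i + unp1 i) / 2))) j) :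
    Real.sqrt (Δx * ∑' j : ℤ, (unp1 j) ^ 2) = Real.sqrt (Δx * ∑' j : ℤ, (un j) ^ 2) := by
  have hΔx0 : Δx ≠ 0 := ne_of_gt hΔx
  have hΔt0 : Δt ≠ 0 := ne_of_gt hΔt
  set w : ℤ → ℝ := fun i => (un i + unp1 i) / 2 with hw
  have hwL2 : Summable (fun j => w j ^ 2) := by
    apply Summable.of_nonneg_of_le (fun j => sq_nonneg _) (fun j => ?_)
      ((hun.add hunp1).div_const 2)
    simp only [hw]
    nlinarith [sq_nonneg (un j - unp1 j)]
  set v : ℤ → ℝ := Dp Δx (Dm Δx w) with hv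
  set g1 : ℤ → ℝ := fun j => w j * Gnl Δx w j with hg1
  set g2 : ℤ → ℝ := fun j => w j * Hdisc v j with hg2
  -- pointwise energy identity
  have hpw : ∀ j, unp1 j ^ 2 - un j ^ 2 = 2 * Δt * (g1 j + g2 j) := by
    intro j
    have h := hscheme j
    have hsum : unp1 j + un j = 2 * w j := by simp only [hw]; ring
    have hdiff : unp1 j - un j = Δt * Gnl Δx w j + Δt * Hdisc v j := by linarith [h]
    calc unp1 j ^ 2 - un j ^ 2 = (unp1 j - un j) * (unp1 j + un j) := by ring
      _ = (Δt * Gnl Δx w j + Δt * Hdisc v j) * (2 * w j) := by rw [hdiff, hsum]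
      _ = 2 * Δt * (g1 j + g2 j) := by simp only [hg1, hg2]; ring
  -- the nonlinear term telescopes
  set a : ℤ → ℝ := fun j => w j ^ 2 * w (j + 1) + w j * w (j + 1) ^ 2 with ha
  have hg1eq : ∀ j, g1 j = (a j - a (j - 1)) / (6 * Δx) := by
    intro j
    simp only [hg1, ha]
    unfold Gnl Dsym
    have e : j - 1 + 1 = j := by omega
    rw [e]
    field_simp
    ring
  set W := ∑' j, w j ^ 2 with hWdef
  have hW0 : 0 ≤ W := tsum_nonneg (fun j => sq_nonneg _)
  have hwbd : ∀ j, |w j| ≤ Real.sqrt W := by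
    intro j
    have h1 : w j ^ 2 ≤ W := Summable.le_tsum hwL2 j (fun i _ => sq_nonneg _)
    have h2 := Real.sqrt_le_sqrt h1
    rwa [Real.sqrt_sq_eq_abs] at h2
  have hsa : Summable a := by
    have h1 : Summable (fun j => w j ^ 2 * w (j + 1)) := by
      rw [← summable_abs_iff]
      apply Summable.of_nonneg_of_le (fun j => abs_nonneg _) (fun j => ?_)
        (hwL2.mul_left (Real.sqrt W))
      rw [abs_mul, abs_of_nonneg (sq_nonneg (w j))]
      calc w j ^ 2 * |w (j + 1)| ≤ w j ^ 2 * Real.sqrt W :=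
            mul_le_mul_of_nonneg_left (hwbd _) (sq_nonneg _)
        _ = Real.sqrt W * w j ^ 2 := by ring
    have h2 : Summable (fun j => w j * w (j + 1) ^ 2) := by
      rw [← summable_abs_iff]
      apply Summable.of_nonneg_of_le (fun j => abs_nonneg _) (fun j => ?_)
        ((L2_shift w 1 hwL2).mul_left (Real.sqrt W))
      rw [abs_mul, abs_of_nonneg (sq_nonneg (w (j + 1)))]
      exact mul_le_mul_of_nonneg_right (hwbd _) (sq_nonneg _)
    rw [ha]
    exact h1.add h2
  have hsa' : Summable (fun j => a (j - 1)) := by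
    have h := summable_shift a (-1) hsa
    apply h.congr
    intro j
    rw [sub_eq_add_neg]
  have hg1sum : Summable g1 := by
    have h := (hsa.sub hsa').div_const (6 * Δx)
    apply h.congr
    intro j
    exact (hg1eq j).symm
  have hg1tsum : ∑' j, g1 j = 0 := by
    rw [tsum_congr hg1eq, tsum_div_const, Summable.tsum_sub hsa hsa']
    have e := (Equiv.subRight (1:ℤ)).tsum_eq (f := a)
    simp only [Equiv.subRight_apply] at e
    rw [e, sub_self, zero_div]
  -- summability of the Hilbert part
  have hqsum : Summable (fun j => unp1 j ^ 2 - un j ^ 2) := hunp1.sub hun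
  have hg2sum : Summable g2 := by
    have h : Summable (fun j => (unp1 j ^ 2 - un j ^ 2) / (2 * Δt) - g1 j) :=
      (hqsum.div_const _).sub hg1sum
    apply h.congr
    intro j
    rw [hpw j]
    field_simp
    ring
  have hqtsum : ∑' j, (unp1 j ^ 2 - un j ^ 2) = 2 * Δt * ∑' j, g2 j := by
    calc ∑' j, (unp1 j ^ 2 - un j ^ 2) = ∑' j, (2 * Δt * g1 j + 2 * Δt * g2 j) :=
          tsum_congr (fun j => by rw [hpw j]; ring)
      _ = 2 * Δt * (∑' j, g1 j) + 2 * Δt * (∑' j, g2 j) := by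
          rw [Summable.tsum_add ((hg1sum.mul_left _)) ((hg2sum.mul_left _)), tsum_mul_left, tsum_mul_left]
      _ = 2 * Δt * ∑' j, g2 j := by rw [hg1tsum]; ring
  -- main cancellation: ∑ g2 = 0
  have key : ∑' j, g2 j = 0 := by
    set w1 : ℕ → ℤ → ℝ := fun N j => if j ∈ Finset.Icc (-(N:ℤ)) (N:ℤ) then w j else 0 with hw1
    set r : ℕ → ℤ → ℝ := fun N j => w j - w1 N j with hr
    set φ : ℕ → ℤ → ℝ := fun N k => D2 (w1 N) k with hφ
    have hw1supp : ∀ N : ℕ, ∀ j ∉ Finset.Icc (-(N:ℤ)) (N:ℤ), w1 N j = 0 := by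
      intro N j hj
      simp only [hw1]
      rw [if_neg hj]
    have hw1L2 : ∀ N : ℕ, Summable (fun j => w1 N j ^ 2) := by
      intro N
      apply Summable.of_nonneg_of_le (fun j => sq_nonneg _) (fun j => ?_) hwL2
      simp only [hw1]
      split
      · exact le_refl _
      · simpa using sq_nonneg (w j)
    have hrL2 : ∀ N : ℕ, Summable (fun j => r N j ^ 2) := by
      intro N
      apply Summable.of_nonneg_of_le (fun j => sq_nonneg _) (fun j => ?_) hwL2
      simp only [hr, hw1]
      split
      · simpa using sq_nonneg (w j)
      · simp
    have hrsq : ∀ (N : ℕ) (j : ℤ), r N j ^ 2 = w j ^ 2 - w1 N j ^ 2 := by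
      intro N j
      simp only [hr, hw1]
      split
      · ring
      · ring
    have hφsupp : ∀ N : ℕ, ∀ j ∉ Finset.Icc (-(N:ℤ) - 1) ((N:ℤ) + 1), φ N j = 0 := by
      intro N j hj
      rw [Finset.mem_Icc] at hj
      have h1 : w1 N (j + 1) = 0 := hw1supp N _ (by rw [Finset.mem_Icc]; omega)
      have h2 : w1 N j = 0 := hw1supp N _ (by rw [Finset.mem_Icc]; omega)
      have h3 : w1 N (j - 1) = 0 := hw1supp N _ (by rw [Finset.mem_Icc]; omega)
      simp only [hφ]
      unfold D2
      rw [h1, h2, h3]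
      ring
    have hφL2 : ∀ N : ℕ, Summable (fun j => φ N j ^ 2) := by
      intro N
      have := L2_D2 (hw1L2 N)
      apply this.congr
      intro j
      simp only [hφ]
    have hHφL2 : ∀ N : ℕ, Summable (fun j => Hdisc (φ N) j ^ 2) :=
      fun N => (Hsq _ (φ N) (hφsupp N)).1
    -- closed form for the partial sums
    have hSN : ∀ N : ℕ, ∑ j ∈ Finset.Icc (-(N:ℤ)) (N:ℤ), g2 j
        = (1 / Δx ^ 2) * (- ∑' j, Hdisc (φ N) j * r N j) := by
      intro N
      have hveq : v = fun k => (1 / Δx ^ 2) * (φ N k + D2 (r N) k) := by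
        funext k
        rw [hv, DpDm_eq Δx hΔx0 w k]
        have e : D2 w k = φ N k + D2 (r N) k := by
          simp only [hφ, hr]
          unfold D2
          ring
        rw [e]
        ring
      have hrsum2 : Summable (fun k => D2 (r N) k ^ 2) := L2_D2 (hrL2 N)
      have hB : ∑ j ∈ Finset.Icc (-(N:ℤ)) (N:ℤ), g2 j = ∑' j, w1 N j * Hdisc v j := by
        rw [tsum_eq_sum (s := Finset.Icc (-(N:ℤ)) (N:ℤ))
          (fun j hj => by rw [hw1supp N j hj, zero_mul])]
        apply Finset.sum_congr rfl
        intro j hj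
        simp only [hg2, hw1]
        rw [if_pos hj]
      have hHv : ∀ j, Hdisc v j
          = (1 / Δx ^ 2) * (Hdisc (φ N) j + Hdisc (fun k => D2 (r N) k) j) := by
        intro j
        rw [hveq, Hdisc_const_mul (1 / Δx ^ 2) (fun k => φ N k + D2 (r N) k) j]
        congr 1
        exact Hdisc_add _ _ (hφL2 N) hrsum2 j
      have hs1 : Summable (fun j => (1 / Δx ^ 2) * (w1 N j * Hdisc (φ N) j)) :=
        summable_of_ne_finset_zero (s := Finset.Icc (-(N:ℤ)) (N:ℤ))
          (fun j hj => by rw [hw1supp N j hj]; ring)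
      have hs2 : Summable (fun j => (1 / Δx ^ 2) * (w1 N j * Hdisc (fun k => D2 (r N) k) j)) :=
        summable_of_ne_finset_zero (s := Finset.Icc (-(N:ℤ)) (N:ℤ))
          (fun j hj => by rw [hw1supp N j hj]; ring)
      have hsplit : ∑' j, w1 N j * Hdisc v j
          = (1 / Δx ^ 2) * ((∑' j, w1 N j * Hdisc (φ N) j)
            + ∑' j, w1 N j * Hdisc (fun k => D2 (r N) k) j) := by
        have e : (fun j => w1 N j * Hdisc v j)
            = fun j => (1 / Δx ^ 2) * (w1 N j * Hdisc (φ N) j)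
              + (1 / Δx ^ 2) * (w1 N j * Hdisc (fun k => D2 (r N) k) j) := by
          funext j
          rw [hHv j]
          ring
        rw [e, Summable.tsum_add hs1 hs2, tsum_mul_left, tsum_mul_left]
        ring
      have hX : ∑' j, w1 N j * Hdisc (φ N) j = 0 := by
        have e1 : ∀ j, Hdisc (φ N) j = D2 (fun i => Hdisc (w1 N) i) j := by
          intro j
          have := Hdisc_D2 (hw1L2 N) j
          simp only [hφ]
          exact this
        have e2 : ∑' j, w1 N j * Hdisc (φ N) j
            = ∑' j, w1 N j * D2 (fun i => Hdisc (w1 N) i) j :=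
          tsum_congr (fun j => by rw [e1 j])
        have e3 := sum_D2_comm (Finset.Icc (-(N:ℤ)) (N:ℤ)) (w1 N) (hw1supp N)
          (fun i => Hdisc (w1 N) i)
        have e5 : ∑' j, D2 (w1 N) j * Hdisc (w1 N) j = ∑' k, φ N k * Hdisc (w1 N) k :=
          tsum_congr (fun j => by simp only [hφ])
        have e4 := swap_lemma (Finset.Icc (-(N:ℤ) - 1) ((N:ℤ) + 1)) (φ N) (w1 N)
          (hφsupp N) (hw1L2 N)
        have e6 : ∑' j, Hdisc (φ N) j * w1 N j = ∑' j, w1 N j * Hdisc (φ N) j :=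
          tsum_congr (fun j => mul_comm _ _)
        have hXX : ∑' j, w1 N j * Hdisc (φ N) j = - ∑' j, w1 N j * Hdisc (φ N) j := by
          calc ∑' j, w1 N j * Hdisc (φ N) j
              = ∑' j, w1 N j * D2 (fun i => Hdisc (w1 N) i) j := e2
            _ = ∑' j, D2 (w1 N) j * Hdisc (w1 N) j := e3
            _ = ∑' k, φ N k * Hdisc (w1 N) k := e5
            _ = - ∑' j, Hdisc (φ N) j * w1 N j := e4
            _ = - ∑' j, w1 N j * Hdisc (φ N) j := by rw [e6]
        linarith [hXX]
      have hY : ∑' j, w1 N j * Hdisc (fun k => D2 (r N) k) j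
          = - ∑' j, Hdisc (φ N) j * r N j := by
        have e1 : ∀ j, Hdisc (fun k => D2 (r N) k) j = D2 (fun i => Hdisc (r N) i) j :=
          fun j => Hdisc_D2 (hrL2 N) j
        have e2 : ∑' j, w1 N j * Hdisc (fun k => D2 (r N) k) j
            = ∑' j, w1 N j * D2 (fun i => Hdisc (r N) i) j :=
          tsum_congr (fun j => by rw [e1 j])
        have e3 := sum_D2_comm (Finset.Icc (-(N:ℤ)) (N:ℤ)) (w1 N) (hw1supp N)
          (fun i => Hdisc (r N) i)
        have e5 : ∑' j, D2 (w1 N) j * Hdisc (r N) j = ∑' k, φ N k * Hdisc (r N) k :=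
          tsum_congr (fun j => by simp only [hφ])
        have e4 := swap_lemma (Finset.Icc (-(N:ℤ) - 1) ((N:ℤ) + 1)) (φ N) (r N)
          (hφsupp N) (hrL2 N)
        rw [e2, e3, e5, e4]
      rw [hB, hsplit, hX, hY]
      ring
    -- the tail ℓ² mass tends to 0
    have hεtend : Tendsto (fun N : ℕ => ∑' j, r N j ^ 2) atTop (𝓝 0) := by
      have he : ∀ N : ℕ, ∑' j, r N j ^ 2 = W - ∑ j ∈ Finset.Icc (-(N:ℤ)) (N:ℤ), w j ^ 2 := by
        intro N
        have e1 : ∑' j, r N j ^ 2 = ∑' j, (w j ^ 2 - w1 N j ^ 2) := tsum_congr (hrsq N)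
        rw [e1, Summable.tsum_sub hwL2 (hw1L2 N), hWdef]
        congr 1
        rw [tsum_eq_sum (s := Finset.Icc (-(N:ℤ)) (N:ℤ))
          (fun j hj => by rw [hw1supp N j hj]; norm_num)]
        apply Finset.sum_congr rfl
        intro j hj
        simp only [hw1]
        rw [if_pos hj]
      have hWt : Tendsto (fun N : ℕ => ∑ j ∈ Finset.Icc (-(N:ℤ)) (N:ℤ), w j ^ 2) atTop (𝓝 W) :=
        hwL2.hasSum.comp tendsto_Icc_atTop
      have h2 := (tendsto_const_nhds (x := W) (f := atTop)).sub hWt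
      rw [sub_self] at h2
      exact h2.congr (fun N => (he N).symm)
    set Bc := (rho 0 / Real.pi ^ 2) * (18 * W) with hBc
    have hbound : ∀ N : ℕ, |∑ j ∈ Finset.Icc (-(N:ℤ)) (N:ℤ), g2 j|
        ≤ (1 / Δx ^ 2) * (Real.sqrt Bc * Real.sqrt (∑' j, r N j ^ 2)) := by
      intro N
      rw [hSN N, abs_mul, abs_neg]
      have hx2 : |1 / Δx ^ 2| = 1 / Δx ^ 2 := abs_of_pos (by positivity)
      rw [hx2]
      apply mul_le_mul_of_nonneg_left _ (by positivity)
      have hcs := tsum_cs (fun j => Hdisc (φ N) j) (r N) (hHφL2 N) (hrL2 N)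
      apply le_trans hcs
      apply mul_le_mul_of_nonneg_right _ (Real.sqrt_nonneg _)
      apply Real.sqrt_le_sqrt
      have heq := (Hsq _ (φ N) (hφsupp N)).2
      rw [heq, hBc]
      apply mul_le_mul_of_nonneg_left _ ?hr0
      case hr0 =>
        have h1 := rho_zero_nonneg
        have h2 := Real.pi_pos
        positivity
      have hb1 : ∑' j, φ N j ^ 2 = ∑' j, D2 (w1 N) j ^ 2 :=
        tsum_congr (fun j => by simp only [hφ])
      rw [hb1]
      calc ∑' j, D2 (w1 N) j ^ 2 ≤ 18 * ∑' j, w1 N j ^ 2 := D2_l2_bound (w1 N) (hw1L2 N)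
        _ ≤ 18 * W := by
            apply mul_le_mul_of_nonneg_left _ (by norm_num)
            rw [hWdef]
            apply Summable.tsum_le_tsum _ (hw1L2 N) hwL2
            intro j
            simp only [hw1]
            split
            · exact le_refl _
            · simpa using sq_nonneg (w j)
    have hb0 : Tendsto (fun N : ℕ => (1 / Δx ^ 2)
        * (Real.sqrt Bc * Real.sqrt (∑' j, r N j ^ 2))) atTop (𝓝 0) := by
      have h1 : Tendsto (fun N : ℕ => Real.sqrt (∑' j, r N j ^ 2)) atTop (𝓝 0) := by
        have h2 := (Real.continuous_sqrt.tendsto 0).comp hεtend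
        simpa [Function.comp_def] using h2
      have h3 := (h1.const_mul (Real.sqrt Bc)).const_mul (1 / Δx ^ 2)
      simpa using h3
    have hStend : Tendsto (fun N : ℕ => ∑ j ∈ Finset.Icc (-(N:ℤ)) (N:ℤ), g2 j) atTop
        (𝓝 (∑' j, g2 j)) := hg2sum.hasSum.comp tendsto_Icc_atTop
    have h00 : Tendsto (fun N : ℕ => ∑ j ∈ Finset.Icc (-(N:ℤ)) (N:ℤ), g2 j) atTop (𝓝 0) :=
      squeeze_zero_norm hbound hb0
    exact tendsto_nhds_unique hStend h00
  -- conclude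
  have hfin : ∑' j, unp1 j ^ 2 = ∑' j, un j ^ 2 := by
    have h2 : ∑' j, (unp1 j ^ 2 - un j ^ 2) = 0 := by rw [hqtsum, key]; ring
    have h3 := Summable.tsum_sub hunp1 hun
    rw [h2] at h3
    linarith [h3]
  rw [hfin]
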